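/- Suppose n ≥ 2, d ≥ 1, 0 ≤ k ≤ n−1, and there exists an additive self-orthogonal code C ⊆ GF(4)ⁿ with |C| = 2^{n−k} such that every vector of C⊥ ∖ C has Hamming weight at least d. Then there exists an additive self-orthogonal code B ⊆ GF(4)^{n−1} with |B| = 2^{(n−1)−k} such that every vector of B⊥ ∖ B has Hamming weight at least d − 1. (If an [[n,k,d]] code exists with n ≥ 2, then an [[n−1,k,d−1]] code exists.) -/
import Mathlib


noncomputable section

open Finset Polynomial

/-- The field `GF(4)` with four elements. -/
abbrev F4 := GaloisField 2 2

/-- The trace inner product `u∗v = Σⱼ (uⱼ v̄ⱼ + ūⱼ vⱼ)` on `GF(4)ⁿ`,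
where conjugation is `x̄ = x²`.  It takes values in the prime subfield. -/
def trIP {n : ℕ} (u v : Fin n → F4) : F4 :=
  ∑ j, (u j * (v j) ^ 2 + (u j) ^ 2 * v j)

/-- The Hamming weight of a vector in `GF(4)ⁿ`. -/
def wt {n : ℕ} (u : Fin n → F4) : ℕ := Set.ncard {j | u j ≠ 0}

/-- The dual of a code with respect to the trace inner product. -/
def trDual {n : ℕ} (C : Set (Fin n → F4)) : Set (Fin n → F4) :=
  {u | ∀ v ∈ C, trIP u v = 0}

/-- An [[n,k,d]] quantum code exists (in the additive sense): there is an
additive self-orthogonal code C ⊆ GF(4)ⁿ with |C| = 2^(n-k) such that every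
vector of C⊥ ∖ C has Hamming weight at least d. -/
def QCodeExists (n k d : ℕ) : Prop :=
  ∃ C : AddSubgroup (Fin n → F4),
    (C : Set (Fin n → F4)) ⊆ trDual (C : Set (Fin n → F4)) ∧
    Nat.card C = 2 ^ (n - k) ∧
    ∀ v ∈ trDual (C : Set (Fin n → F4)) \ (C : Set (Fin n → F4)), d ≤ wt v

noncomputable instance : Fintype F4 := Fintype.ofFinite _

lemma F4two : (2 : F4) = 0 := by exact_mod_cast CharP.cast_eq_zero F4 2

lemma F4card : Fintype.card F4 = 4 := by
  have := GaloisField.card 2 2 (by norm_num); simpa using this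

lemma F4cube (x : F4) (hx : x ≠ 0) : x ^ 3 = 1 := by
  have := FiniteField.pow_card_sub_one_eq_one x hx
  rw [F4card] at this; simpa using this

lemma bone {x y : F4} (hx : x ≠ 0) (hy : y ≠ 0) (hxy : x ≠ y) :
    x * y ^ 2 + x ^ 2 * y = 1 := by
  have hxy0 : x + y ≠ 0 := fun h => hxy (by linear_combination h - y * F4two)
  have hne : x * y * (x + y) ≠ 0 := mul_ne_zero (mul_ne_zero hx hy) hxy0
  have hx3 := F4cube x hx
  have hy3 := F4cube y hy
  have hsq : (x * y * (x + y)) ^ 2 = x * y * (x + y) := by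
    linear_combination (x * y ^ 2) * hx3 + (x ^ 2 * y) * hy3 + (x ^ 3 * y ^ 3) * F4two
  have hmul : (x * y * (x + y)) * ((x * y * (x + y)) - 1) = 0 := by linear_combination hsq
  rcases mul_eq_zero.1 hmul with h | h
  · exact absurd h hne
  · have : x * y * (x + y) = 1 := by linear_combination h
    linear_combination this

lemma bval (x y : F4) : x * y ^ 2 + x ^ 2 * y = 0 ∨ x * y ^ 2 + x ^ 2 * y = 1 := by
  rcases eq_or_ne x 0 with rfl | hx
  · left; ring
  rcases eq_or_ne y 0 with rfl | hy
  · left; ring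
  rcases eq_or_ne x y with rfl | hxy
  · left; linear_combination (x ^ 3) * F4two
  · right; exact bone hx hy hxy

lemma bzero {a x y : F4} (hx : x = 0 ∨ x = a) (hy : y = 0 ∨ y = a) :
    x * y ^ 2 + x ^ 2 * y = 0 := by
  have h3 : ∀ z : F4, z * z ^ 2 + z ^ 2 * z = 0 := fun z => by
    linear_combination z ^ 3 * F4two
  rcases hx with h | h <;> rcases hy with h' | h' <;> rw [h, h']
  · ring
  · ring
  · ring
  · exact h3 a

lemma exhaust {a c : F4} (ha : a ≠ 0) (hc : c ≠ 0) (hac : a ≠ c) (x : F4) :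
    x = 0 ∨ x = a ∨ x = c ∨ x = a + c := by
  classical
  have h1 : a + c ≠ 0 := fun h => hac (by linear_combination h - c * F4two)
  have h2 : a + c ≠ a := fun h => hc (by linear_combination h)
  have h3 : a + c ≠ c := fun h => ha (by linear_combination h)
  have hcard4 : ({0, a, c, a + c} : Finset F4).card = 4 := by
    rw [Finset.card_insert_of_notMem (by simp [Ne.symm ha, Ne.symm hc, Ne.symm h1]),
      Finset.card_insert_of_notMem (by simp [hac, Ne.symm h2]),
      Finset.card_insert_of_notMem (by simp [Ne.symm h3]), Finset.card_singleton]
  have huniv : ({0, a, c, a + c} : Finset F4) = Finset.univ :=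
    Finset.eq_univ_of_card _ (hcard4.trans F4card.symm)
  have hx : x ∈ ({0, a, c, a + c} : Finset F4) := huniv ▸ Finset.mem_univ x
  simpa using hx

lemma exists_two {b : F4} (hb : b ≠ 0) :
    ∃ a₁ a₂ : F4, a₁ ≠ 0 ∧ a₂ ≠ 0 ∧ a₁ ≠ b ∧ a₂ ≠ b ∧ a₁ ≠ a₂ := by
  classical
  obtain ⟨z, hz0, hz1⟩ : ∃ z : F4, z ≠ 0 ∧ z ≠ 1 := by
    by_contra hcon
    push_neg at hcon
    have hsub : (Finset.univ : Finset F4) ⊆ {0, 1} := by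
      intro z _
      rcases eq_or_ne z 0 with rfl | hz
      · simp
      · simp [hcon z hz]
    have := Finset.card_le_card hsub
    rw [Finset.card_univ, F4card] at this
    have h2 : ({0, 1} : Finset F4).card ≤ 2 := Finset.card_insert_le _ _ |>.trans (by simp)
    omega
  have h1z : (1 : F4) ≠ z := Ne.symm hz1
  have hz10 : (1 : F4) + z ≠ 0 := fun h => hz1 (by linear_combination h - F4two)
  have hz11 : (1 : F4) + z ≠ 1 := fun h => hz0 (by linear_combination h)
  have hz1z : (1 : F4) + z ≠ z := fun h => one_ne_zero (α := F4) (by linear_combination h)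
  rcases exhaust one_ne_zero hz0 h1z b with h | h | h | h
  · exact absurd h hb
  · exact ⟨z, 1 + z, hz0, hz10, h ▸ hz1, h ▸ hz11, fun hh => hz1z hh.symm⟩
  · exact ⟨1, 1 + z, one_ne_zero, hz10, h ▸ h1z, h ▸ hz1z, Ne.symm hz11⟩
  · exact ⟨1, z, one_ne_zero, hz0, h ▸ Ne.symm hz11, h ▸ Ne.symm hz1z, h1z⟩

lemma trIP_insert {m : ℕ} (j : Fin (m + 1)) (x y : F4) (u v : Fin m → F4) :
    trIP (j.insertNth x u) (j.insertNth y v) = (x * y ^ 2 + x ^ 2 * y) + trIP u v := by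
  unfold trIP
  rw [Fin.sum_univ_succAbove _ j]
  simp

lemma trIP_add_right {n : ℕ} (u v w : Fin n → F4) :
    trIP u (v + w) = trIP u v + trIP u w := by
  unfold trIP
  rw [← Finset.sum_add_distrib]
  refine Finset.sum_congr rfl fun i _ => ?_
  simp only [Pi.add_apply]
  linear_combination (u i * v i * w i) * F4two

lemma trIP01 {n : ℕ} (u v : Fin n → F4) : trIP u v = 0 ∨ trIP u v = 1 := by
  unfold trIP
  refine Finset.sum_induction _ (fun t => t = 0 ∨ t = 1) ?_ (Or.inl rfl) fun i _ => bval _ _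
  rintro s t (rfl | rfl) (rfl | rfl)
  · left; ring
  · right; ring
  · right; ring
  · left; linear_combination F4two

lemma ins_add {m : ℕ} (j : Fin (m + 1)) (x y : F4) (u v : Fin m → F4) :
    j.insertNth (α := fun _ => F4) (x + y) (u + v) =
      j.insertNth (α := fun _ => F4) x u + j.insertNth (α := fun _ => F4) y v := by
  funext i
  rcases eq_or_ne i j with rfl | hij
  · simp
  · obtain ⟨i', rfl⟩ := Fin.exists_succAbove_eq hij
    simp

lemma ins_zero {m : ℕ} (j : Fin (m + 1)) :
    j.insertNth (α := fun _ => F4) (0 : F4) (0 : Fin m → F4) = 0 := by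
  funext i
  rcases eq_or_ne i j with rfl | hij
  · simp
  · obtain ⟨i', rfl⟩ := Fin.exists_succAbove_eq hij
    simp

lemma wt_insert_le {m : ℕ} (j : Fin (m + 1)) (x : F4) (u : Fin m → F4) :
    wt (j.insertNth x u) ≤ wt u + 1 := by
  unfold wt
  have hsub : {i | (j.insertNth x u : Fin (m + 1) → F4) i ≠ 0} ⊆
      insert j (j.succAbove '' {i | u i ≠ 0}) := by
    intro i hi
    rcases eq_or_ne i j with rfl | hij
    · exact Set.mem_insert _ _
    · obtain ⟨i', rfl⟩ := Fin.exists_succAbove_eq hij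
      refine Set.mem_insert_of_mem _ ⟨i', ?_, rfl⟩
      simpa using hi
  calc {i | (j.insertNth x u : Fin (m + 1) → F4) i ≠ 0}.ncard
      ≤ (insert j (j.succAbove '' {i | u i ≠ 0})).ncard :=
        Set.ncard_le_ncard hsub (Set.toFinite _)
    _ ≤ (j.succAbove '' {i | u i ≠ 0}).ncard + 1 := Set.ncard_insert_le _ _
    _ = {i | u i ≠ 0}.ncard + 1 := by
        rw [Set.ncard_image_of_injective _ (Fin.succAbove_right_injective)]


/-- If an [[n,k,d]] code exists with n ≥ 2, then an [[n-1,k,d-1]] code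
exists. -/
theorem qcode_shorten (n k d : ℕ) (hn : 2 ≤ n) (hd : 1 ≤ d) (hkn : k ≤ n - 1)
    (h : QCodeExists n k d) : QCodeExists (n - 1) k (d - 1) := by
  obtain ⟨m, rfl⟩ : ∃ m, n = m + 1 := ⟨n - 1, by omega⟩
  simp only [Nat.add_sub_cancel] at hkn ⊢
  obtain ⟨C, hso, hcard, hwt⟩ := h
  -- find an element of C with a nonzero coordinate
  obtain ⟨w, hwC, hwne⟩ : ∃ v ∈ C, v ≠ (0 : Fin (m + 1) → F4) := by
    by_contra hcon
    push_neg at hcon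
    have hbot : C = ⊥ := (AddSubgroup.eq_bot_iff_forall C).2 hcon
    have h1 : Nat.card C = 1 := by rw [hbot]; simp
    rw [hcard] at h1
    have h3 : 1 < 2 ^ (m + 1 - k) := Nat.one_lt_pow (by omega) (by norm_num)
    omega
  obtain ⟨j, hj⟩ : ∃ j, w j ≠ 0 := by
    by_contra hcon
    push_neg at hcon
    exact hwne (funext hcon)
  set c := w j with hcdef
  have hc0 : c ≠ 0 := hj
  -- choose a suitable `a`
  obtain ⟨a, ha0, hac, haC⟩ : ∃ a : F4, a ≠ 0 ∧ a ≠ c ∧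
      j.insertNth a (0 : Fin m → F4) ∉ C := by
    obtain ⟨a₁, a₂, ha₁0, ha₂0, ha₁c, ha₂c, ha₁₂⟩ := exists_two hc0
    by_cases h1 : j.insertNth a₁ (0 : Fin m → F4) ∈ C
    · by_cases h2 : j.insertNth a₂ (0 : Fin m → F4) ∈ C
      · exfalso
        have h0 := hso h1 _ h2
        rw [trIP_insert] at h0
        have hz : trIP (0 : Fin m → F4) 0 = 0 := by simp [trIP]
        rw [hz, add_zero, bone ha₁0 ha₂0 ha₁₂] at h0
        exact one_ne_zero h0
      · exact ⟨a₂, ha₂0, ha₂c, h2⟩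
    · exact ⟨a₁, ha₁0, ha₁c, h1⟩
  have haddw : ∀ t : Fin (m + 1) → F4, t + w + w = t := by
    intro t; funext i; simp only [Pi.add_apply]
    linear_combination (w i) * F4two
  -- the shortened code
  refine ⟨{ carrier := {u' | ∃ x : F4, (x = 0 ∨ x = a) ∧ j.insertNth x u' ∈ C}
            zero_mem' := ⟨0, Or.inl rfl, by rw [ins_zero]; exact C.zero_mem⟩
            add_mem' := ?_
            neg_mem' := ?_ }, ?_, ?_, ?_⟩
  · rintro u' v' ⟨x, hx01, hxC⟩ ⟨y, hy01, hyC⟩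
    refine ⟨x + y, ?_, ?_⟩
    · rcases hx01 with h | h <;> rcases hy01 with h' | h' <;> rw [h, h']
      · left; ring
      · right; ring
      · right; ring
      · left; linear_combination a * F4two
    · rw [ins_add]; exact C.add_mem hxC hyC
  · rintro u' ⟨x, hx01, hxC⟩
    have hneg : -u' = u' := by
      funext i
      have : -(u' i) = u' i := by linear_combination (-(u' i)) * F4two
      simpa using this
    exact ⟨x, hx01, by rw [hneg]; exact hxC⟩
  -- self-orthogonality
  · rintro u' ⟨x, hx01, hxC⟩ v' ⟨y, hy01, hyC⟩
    have h0 := hso hxC _ hyC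
    rw [trIP_insert, bzero hx01 hy01, zero_add] at h0
    exact h0
  -- cardinality
  · rw [← SetLike.coe_sort_coe, Nat.card_coe_set_eq]
    show ({u' | ∃ x : F4, (x = 0 ∨ x = a) ∧ j.insertNth x u' ∈ C} :
      Set (Fin m → F4)).ncard = 2 ^ (m - k)
    have hcard' : (C : Set (Fin (m + 1) → F4)).ncard = 2 ^ (m + 1 - k) := by
      rw [← Nat.card_coe_set_eq, SetLike.coe_sort_coe]; exact hcard
    set S₀ : Set (Fin (m + 1) → F4) := {t | t ∈ C ∧ (t j = 0 ∨ t j = a)} with hS₀def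
    set S₁ : Set (Fin (m + 1) → F4) := {t | t ∈ C ∧ ¬(t j = 0 ∨ t j = a)} with hS₁def
    have hunion : (C : Set (Fin (m + 1) → F4)) = S₀ ∪ S₁ := by
      ext t; constructor
      · intro ht
        by_cases hcase : t j = 0 ∨ t j = a
        · exact Or.inl ⟨ht, hcase⟩
        · exact Or.inr ⟨ht, hcase⟩
      · rintro (⟨ht, -⟩ | ⟨ht, -⟩) <;> exact ht
    have hdisj : Disjoint S₀ S₁ := by
      rw [Set.disjoint_left]
      rintro t ⟨-, h1⟩ ⟨-, h2⟩
      exact h2 h1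
    have himg : (fun t => t + w) '' S₀ = S₁ := by
      ext t; constructor
      · rintro ⟨s, ⟨hsC, hsj⟩, rfl⟩
        refine ⟨C.add_mem hsC hwC, ?_⟩
        intro hcon
        rcases hcon with hh | hh
        · simp only [Pi.add_apply] at hh
          rw [← hcdef] at hh
          rcases hsj with h0 | hA
          · rw [h0, zero_add] at hh; exact hc0 hh
          · rw [hA] at hh; exact hac (by linear_combination hh - c * F4two)
        · simp only [Pi.add_apply] at hh
          rw [← hcdef] at hh
          rcases hsj with h0 | hA
          · rw [h0, zero_add] at hh; exact hac hh.symm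
          · rw [hA] at hh; exact hc0 (by linear_combination hh)
      · rintro ⟨htC, htj⟩
        refine ⟨t + w, ⟨C.add_mem htC hwC, ?_⟩, haddw t⟩
        rcases exhaust ha0 hc0 hac (t j) with hh | hh | hh | hh
        · exact absurd (Or.inl hh) htj
        · exact absurd (Or.inr hh) htj
        · left
          simp only [Pi.add_apply]
          rw [hh, ← hcdef]
          linear_combination c * F4two
        · right
          simp only [Pi.add_apply]
          rw [hh, ← hcdef]
          linear_combination c * F4two
    have hcount : (C : Set (Fin (m + 1) → F4)).ncard = 2 * S₀.ncard := by
      rw [hunion, Set.ncard_union_eq hdisj (Set.toFinite _) (Set.toFinite _), ← himg,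
        Set.ncard_image_of_injective _ (add_left_injective w)]
      ring
    have hBimg : ({u' | ∃ x : F4, (x = 0 ∨ x = a) ∧ j.insertNth x u' ∈ C} :
        Set (Fin m → F4)) = (fun t => j.removeNth t) '' S₀ := by
      ext u'; constructor
      · rintro ⟨x, hx01, hxC⟩
        refine ⟨j.insertNth x u', ⟨hxC, ?_⟩, ?_⟩
        · rw [Fin.insertNth_apply_same]; exact hx01
        · exact Fin.removeNth_insertNth (α := fun _ => F4) j x u'
      · rintro ⟨t, ⟨htC, htj⟩, rfl⟩
        exact ⟨t j, htj, by rw [Fin.insertNth_self_removeNth]; exact htC⟩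
    have hinj : Set.InjOn (fun t => j.removeNth t) S₀ := by
      rintro t ⟨htC, htj⟩ t' ⟨ht'C, ht'j⟩ hE
      have hE' : j.removeNth t = j.removeNth t' := hE
      have hsum0 : j.removeNth (t + t') = 0 := by
        funext i
        have hti := congrFun hE' i
        simp only [Fin.removeNth] at hti ⊢
        simp only [Pi.add_apply, Pi.zero_apply]
        linear_combination hti + (t' (j.succAbove i)) * F4two
      have hbad : ¬ ((t + t') j = a) := by
        intro hjw
        have heq : t + t' = j.insertNth a (0 : Fin m → F4) := by
          conv_lhs => rw [← Fin.insertNth_self_removeNth j (t + t')]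
          rw [hjw, hsum0]
        exact haC (heq ▸ C.add_mem htC ht'C)
      have hjj : t j = t' j := by
        rcases htj with h0 | hA <;> rcases ht'j with h0' | hA'
        · rw [h0, h0']
        · exfalso
          exact hbad (by simp only [Pi.add_apply]; rw [h0, hA']; ring)
        · exfalso
          exact hbad (by simp only [Pi.add_apply]; rw [hA, h0']; ring)
        · rw [hA, hA']
      conv_lhs => rw [← Fin.insertNth_self_removeNth j t]
      conv_rhs => rw [← Fin.insertNth_self_removeNth j t']
      rw [hjj, hE']
    rw [hBimg, Set.ncard_image_of_injOn hinj]
    rw [hcount] at hcard'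
    have hmk : m + 1 - k = (m - k) + 1 := by omega
    rw [hmk, pow_succ] at hcard'
    omega
  -- minimum distance
  · intro u' hu'
    obtain ⟨hu'd, hu'nB⟩ := hu'
    obtain ⟨x, hx01, hbxc⟩ : ∃ x : F4, (x = 0 ∨ x = a) ∧
        (x * c ^ 2 + x ^ 2 * c) + trIP u' (j.removeNth w) = 0 := by
      rcases trIP01 u' (j.removeNth w) with hε | hε
      · exact ⟨0, Or.inl rfl, by rw [hε]; ring⟩
      · refine ⟨a, Or.inr rfl, ?_⟩
        rw [hε, bone ha0 hc0 hac]
        linear_combination F4two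
    have keyA : ∀ t, t ∈ C → (t j = 0 ∨ t j = a) → trIP (j.insertNth x u') t = 0 := by
      intro t htC htj
      have hthis := trIP_insert j x (t j) u' (j.removeNth t)
      rw [Fin.insertNth_self_removeNth] at hthis
      rw [hthis, bzero hx01 htj, zero_add]
      exact hu'd _ ⟨t j, htj, by rw [Fin.insertNth_self_removeNth]; exact htC⟩
    have keyW : trIP (j.insertNth x u') w = 0 := by
      have hthis := trIP_insert j x (w j) u' (j.removeNth w)
      rw [Fin.insertNth_self_removeNth] at hthis
      rw [hthis, ← hcdef]
      exact hbxc
    have key : ∀ t ∈ (C : Set (Fin (m + 1) → F4)), trIP (j.insertNth x u') t = 0 := by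
      intro t htC
      rcases exhaust ha0 hc0 hac (t j) with hh | hh | hh | hh
      · exact keyA t htC (Or.inl hh)
      · exact keyA t htC (Or.inr hh)
      · have h1 : t + w ∈ C := C.add_mem htC hwC
        have h2 : (t + w) j = 0 ∨ (t + w) j = a := by
          left
          simp only [Pi.add_apply]
          rw [hh, ← hcdef]
          linear_combination c * F4two
        have h3 := keyA (t + w) h1 h2
        have hrw : t = (t + w) + w := (haddw t).symm
        rw [hrw, trIP_add_right, h3, keyW, add_zero]
      · have h1 : t + w ∈ C := C.add_mem htC hwC
        have h2 : (t + w) j = 0 ∨ (t + w) j = a := by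
          right
          simp only [Pi.add_apply]
          rw [hh, ← hcdef]
          linear_combination c * F4two
        have h3 := keyA (t + w) h1 h2
        have hrw : t = (t + w) + w := (haddw t).symm
        rw [hrw, trIP_add_right, h3, keyW, add_zero]
    have hnotC : j.insertNth x u' ∉ C := fun hmem => hu'nB ⟨x, hx01, hmem⟩
    have hge := hwt (j.insertNth x u') ⟨key, hnotC⟩
    have hle := wt_insert_le j x u'
    omega
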